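/- (Main Lemma.) Let V and E be finite types with maps s, r : E → V and adjacency matrix A. Then for every permutation ρ of V, the signed elementary product of the matrix 1 − A corresponding to ρ equals the signed count of circuit configurations inducing ρ: sign(ρ) · ∏_{v ∈ V} ((1 − A) v (ρ v)) = Σ_D (−1)^{c(D)}, where the sum ranges over all circuit configurations D with induced permutation ρ_D = ρ. Equivalently, this quantity equals the number of circuit configurations D with ρ_D = ρ and c(D) even, minus the number with ρ_D = ρ and c(D) odd. -/

import Mathlib

open scoped Classical

/-- The adjacency matrix of the finite directed multigraph with vertices `V`, edges `E`,
source map `s` and range map `r`: the `(v, w)` entry is the number of edges from `v` to `w`. -/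
noncomputable def adjMatrix {V E : Type*} (s r : E → V) : Matrix V V ℤ :=
  Matrix.of fun v w => (Nat.card {e : E // s e = v ∧ r e = w} : ℤ)

/-- A circuit configuration: a finset of edges on which `s` and `r` are injective and
whose `s`-image equals its `r`-image.  Such finsets are precisely the unions of the
circuits of vertex-disjoint sets of directed circuits. -/
def IsCircuitConfig {V E : Type*} [DecidableEq V] (s r : E → V) (D : Finset E) : Prop :=
  Set.InjOn s ↑D ∧ Set.InjOn r ↑D ∧ D.image s = D.image r

/-- `ρ` is the permutation induced by the finset of edges `D`: it sends `s e` to `r e`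
for each `e ∈ D` and fixes every vertex outside the `s`-image of `D`. -/
def Induces {V E : Type*} [DecidableEq V] (s r : E → V) (D : Finset E)
    (ρ : Equiv.Perm V) : Prop :=
  (∀ e ∈ D, ρ (s e) = r e) ∧ ∀ v ∉ D.image s, ρ v = v

/-- The permutation induced by a circuit configuration `D` (the identity if no
permutation is induced by `D`). -/
noncomputable def inducedPerm {V E : Type*} [DecidableEq V] (s r : E → V)
    (D : Finset E) : Equiv.Perm V :=
  if h : ∃ ρ : Equiv.Perm V, Induces s r D ρ then h.choose else 1

/-- The setoid on `V` whose classes are the orbits of the permutation `ρ`. -/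
def sameCycleSetoid {V : Type*} (ρ : Equiv.Perm V) : Setoid V where
  r := ρ.SameCycle
  iseqv := ⟨fun x => Equiv.Perm.SameCycle.refl ρ x,
    Equiv.Perm.SameCycle.symm, Equiv.Perm.SameCycle.trans⟩

/-- The number of circuits of a configuration `D` with induced permutation `ρ`:
the number of orbits of `ρ` that meet the `s`-image of `D`. -/
noncomputable def numCircuits {V E : Type*} (s : E → V) (D : Finset E)
    (ρ : Equiv.Perm V) : ℕ :=
  (Quotient.mk (sameCycleSetoid ρ) '' (s '' ↑D)).ncard

set_option linter.unusedSectionVars false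

section Aux

variable {V E : Type*} [Fintype V] [Fintype E] [DecidableEq V] (s r : E → V)

lemma induces_unique {D : Finset E} {ρ ρ' : Equiv.Perm V}
    (h : Induces s r D ρ) (h' : Induces s r D ρ') : ρ = ρ' := by
  ext v
  by_cases hv : v ∈ D.image s
  · obtain ⟨e, he, rfl⟩ := Finset.mem_image.mp hv
    rw [h.1 e he, h'.1 e he]
  · rw [h.2 v hv, h'.2 v hv]

lemma inducedPerm_eq {D : Finset E} {ρ : Equiv.Perm V} (h : Induces s r D ρ) :
    inducedPerm s r D = ρ := by
  have hex : ∃ ρ', Induces s r D ρ' := ⟨ρ, h⟩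
  rw [inducedPerm, dif_pos hex]
  exact induces_unique s r hex.choose_spec h

lemma exists_induces {D : Finset E} (h : IsCircuitConfig s r D) :
    ∃ ρ : Equiv.Perm V, Induces s r D ρ := by
  obtain ⟨hs, hr, him⟩ := h
  set g : V → V := fun v =>
    if hv : v ∈ D.image s then r (Finset.mem_image.mp hv).choose else v with hg
  have key : ∀ e ∈ D, g (s e) = r e := by
    intro e he
    have hv : s e ∈ D.image s := Finset.mem_image_of_mem s he
    have hc := (Finset.mem_image.mp hv).choose_spec
    have : (Finset.mem_image.mp hv).choose = e := hs hc.1 he hc.2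
    simp only [hg, dif_pos hv, this]
  have hmem : ∀ v ∈ D.image s, g v ∈ D.image s := by
    intro v hv
    obtain ⟨e, he, rfl⟩ := Finset.mem_image.mp hv
    rw [key e he, him]
    exact Finset.mem_image_of_mem r he
  have hfix : ∀ v ∉ D.image s, g v = v := by
    intro v hv; simp only [hg, dif_neg hv]
  have hinj : Function.Injective g := by
    intro v w hvw
    by_cases hv : v ∈ D.image s <;> by_cases hw : w ∈ D.image s
    · obtain ⟨e, he, rfl⟩ := Finset.mem_image.mp hv
      obtain ⟨f, hf, rfl⟩ := Finset.mem_image.mp hw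
      rw [key e he, key f hf] at hvw
      rw [hr he hf hvw]
    · exact absurd (hfix w hw ▸ hvw ▸ hmem v hv) hw
    · exact absurd ((hfix v hv).symm ▸ hvw ▸ hmem w hw) hv
    · rw [hfix v hv, hfix w hw] at hvw; exact hvw
  refine ⟨Equiv.ofBijective g (Finite.injective_iff_bijective.mp hinj), ?_, ?_⟩
  · intro e he; exact key e he
  · intro v hv; exact hfix v hv

lemma image_eq_self_of_support_subset {ρ : Equiv.Perm V} {t : Finset V}
    (ht : ρ.support ⊆ t) : t.image ρ = t := by
  apply Finset.eq_of_subset_of_card_le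
  · intro w hw
    obtain ⟨v, hv, rfl⟩ := Finset.mem_image.mp hw
    by_cases h : v ∈ ρ.support
    · exact ht (Equiv.Perm.apply_mem_support.mpr h)
    · rwa [Equiv.Perm.notMem_support.mp h]
  · rw [Finset.card_image_of_injective _ ρ.injective]

lemma count_lemma (ρ : Equiv.Perm V) (t : Finset V) (ht : ρ.support ⊆ t) :
    ∏ v ∈ t, Nat.card {e : E // s e = v ∧ r e = ρ v} =
      (Finset.univ.filter (fun D : Finset E =>
        IsCircuitConfig s r D ∧ Induces s r D ρ ∧ D.image s = t)).card := by
  have h1 : ∏ v ∈ t, Nat.card {e : E // s e = v ∧ r e = ρ v} =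
      Fintype.card (∀ v : {x // x ∈ t}, {e : E // s e = v.1 ∧ r e = ρ v.1}) := by
    rw [Fintype.card_pi]
    simp_rw [← Nat.card_eq_fintype_card]
    exact (Finset.prod_attach t fun v => Nat.card {e : E // s e = v ∧ r e = ρ v}).symm
  rw [h1, ← Finset.card_univ]
  refine Finset.card_bij
    (fun f _ => Finset.image (fun v : {x // x ∈ t} => (f v : E)) t.attach) ?_ ?_ ?_
  · intro f _
    show Finset.image (fun v : {x // x ∈ t} => (f v : E)) t.attach ∈ _
    set D := Finset.image (fun v : {x // x ∈ t} => (f v : E)) t.attach with hD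
    have hmemD : ∀ e ∈ D, ∃ v : {x // x ∈ t}, e = (f v : E) := by
      intro e he
      obtain ⟨v, _, rfl⟩ := Finset.mem_image.mp he
      exact ⟨v, rfl⟩
    have hse : ∀ v : {x // x ∈ t}, s (f v : E) = v.1 := fun v => (f v).2.1
    have hre : ∀ v : {x // x ∈ t}, r (f v : E) = ρ v.1 := fun v => (f v).2.2
    have hims : D.image s = t := by
      rw [hD, Finset.image_image]
      have : (s ∘ fun v : {x // x ∈ t} => (f v : E)) = fun v => v.1 := by
        funext v; exact hse v
      rw [this, Finset.attach_image_val]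
    have himr : D.image r = t := by
      rw [hD, Finset.image_image]
      have h2 : (r ∘ fun v : {x // x ∈ t} => (f v : E)) = fun v => ρ v.1 := by
        funext v; exact hre v
      rw [h2]
      have h3 : Finset.image (fun v : {x // x ∈ t} => ρ v.1) t.attach =
          Finset.image ρ (Finset.image Subtype.val t.attach) := by
        rw [Finset.image_image]; rfl
      rw [h3, Finset.attach_image_val, image_eq_self_of_support_subset ht]
    refine Finset.mem_filter.mpr
      ⟨Finset.mem_univ _, ⟨?_, ?_, hims.trans himr.symm⟩, ⟨?_, ?_⟩, hims⟩
    · intro e he e' he' hee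
      obtain ⟨v, rfl⟩ := hmemD e he
      obtain ⟨v', rfl⟩ := hmemD e' he'
      rw [hse, hse] at hee
      rw [Subtype.ext hee]
    · intro e he e' he' hee
      obtain ⟨v, rfl⟩ := hmemD e he
      obtain ⟨v', rfl⟩ := hmemD e' he'
      rw [hre, hre] at hee
      rw [Subtype.ext (ρ.injective hee)]
    · intro e he
      obtain ⟨v, rfl⟩ := hmemD e he
      rw [hse, hre]
    · intro v hv
      rw [hims] at hv
      exact Equiv.Perm.notMem_support.mp fun hc => hv (ht hc)
  · intro f _ f' _ hff
    have hff' : Finset.image (fun v : {x // x ∈ t} => (f v : E)) t.attach =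
        Finset.image (fun v : {x // x ∈ t} => (f' v : E)) t.attach := hff
    funext v
    have hv : (f v : E) ∈ Finset.image (fun v : {x // x ∈ t} => (f' v : E)) t.attach := by
      rw [← hff']; exact Finset.mem_image_of_mem _ (Finset.mem_attach t v)
    obtain ⟨w, _, hw⟩ := Finset.mem_image.mp hv
    have hwv : w = v := Subtype.ext (by rw [← (f' w).2.1, hw, (f v).2.1])
    subst hwv
    exact Subtype.ext hw.symm
  · rintro D hD
    obtain ⟨-, ⟨hs, hr, him⟩, ⟨hind1, hind2⟩, himt⟩ := Finset.mem_filter.mp hD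
    have pick : ∀ v : {x // x ∈ t}, ∃ e, e ∈ D ∧ s e = v.1 := by
      intro v
      have : v.1 ∈ D.image s := himt ▸ v.2
      exact Finset.mem_image.mp this
    have hre : ∀ v : {x // x ∈ t}, r (pick v).choose = ρ v.1 := by
      intro v
      have h2 := (pick v).choose_spec
      have h3 := hind1 _ h2.1
      rw [h2.2] at h3
      exact h3.symm
    refine ⟨fun v => ⟨(pick v).choose, (pick v).choose_spec.2, hre v⟩, Finset.mem_univ _, ?_⟩
    show Finset.image _ t.attach = D
    apply Finset.Subset.antisymm
    · intro e he
      obtain ⟨v, _, rfl⟩ := Finset.mem_image.mp he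
      exact (pick v).choose_spec.1
    · intro e he
      have hv : s e ∈ t := himt ▸ Finset.mem_image_of_mem s he
      refine Finset.mem_image.mpr ⟨⟨s e, hv⟩, Finset.mem_attach _ _, ?_⟩
      exact hs (pick ⟨s e, hv⟩).choose_spec.1 he (pick ⟨s e, hv⟩).choose_spec.2

lemma filter_config_eq (ρ : Equiv.Perm V) (t : Finset V) :
    (Finset.univ.filter (fun D : Finset E =>
        IsCircuitConfig s r D ∧ Induces s r D ρ ∧ D.image s = t)) =
    (Finset.univ.filter (fun D : Finset E =>
        IsCircuitConfig s r D ∧ inducedPerm s r D = ρ)).filter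
      (fun D => D.image s = t) := by
  ext D
  simp only [Finset.mem_filter, Finset.mem_univ, true_and]
  constructor
  · rintro ⟨hc, hi, hit⟩
    exact ⟨⟨hc, inducedPerm_eq s r hi⟩, hit⟩
  · rintro ⟨⟨hc, hip⟩, hit⟩
    obtain ⟨ρ', hρ'⟩ := exists_induces s r hc
    have := inducedPerm_eq s r hρ'
    rw [this] at hip
    exact ⟨hc, hip ▸ hρ', hit⟩

lemma prod_eq_sum (ρ : Equiv.Perm V) :
    ∏ v : V, ((1 : Matrix V V ℤ) - adjMatrix s r) v (ρ v) =
      ∑ D ∈ Finset.univ.filter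
          (fun D : Finset E => IsCircuitConfig s r D ∧ inducedPerm s r D = ρ),
        (-1 : ℤ) ^ D.card := by
  have entry : ∀ v : V, ((1 : Matrix V V ℤ) - adjMatrix s r) v (ρ v) =
      (-(Nat.card {e : E // s e = v ∧ r e = ρ v} : ℤ)) +
        (if v = ρ v then 1 else 0) := by
    intro v
    simp [Matrix.sub_apply, Matrix.one_apply, adjMatrix, Matrix.of_apply]
    ring
  calc ∏ v : V, ((1 : Matrix V V ℤ) - adjMatrix s r) v (ρ v)
      = ∏ v : V, ((-(Nat.card {e : E // s e = v ∧ r e = ρ v} : ℤ)) +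
          (if v = ρ v then 1 else 0)) :=
        Finset.prod_congr rfl fun v _ => entry v
    _ = ∑ t ∈ (Finset.univ : Finset V).powerset,
          (∏ v ∈ t, (-(Nat.card {e : E // s e = v ∧ r e = ρ v} : ℤ))) *
          ∏ v ∈ Finset.univ \ t, (if v = ρ v then 1 else 0) := Finset.prod_add _ _ _
    _ = ∑ t ∈ (Finset.univ : Finset V).powerset,
          (if ρ.support ⊆ t then
            (-1 : ℤ) ^ t.card *
              ((Finset.univ.filter (fun D : Finset E =>
                IsCircuitConfig s r D ∧ Induces s r D ρ ∧ D.image s = t)).card : ℤ)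
          else 0) := by
        refine Finset.sum_congr rfl fun t _ => ?_
        by_cases ht : ρ.support ⊆ t
        · rw [if_pos ht]
          have h2 : ∏ v ∈ Finset.univ \ t, (if v = ρ v then (1:ℤ) else 0) = 1 := by
            apply Finset.prod_eq_one
            intro v hv
            rw [Finset.mem_sdiff] at hv
            have : ρ v = v := Equiv.Perm.notMem_support.mp fun hc => hv.2 (ht hc)
            rw [if_pos this.symm]
          have h3 : ∏ v ∈ t, (-(Nat.card {e : E // s e = v ∧ r e = ρ v} : ℤ)) =
              (-1 : ℤ) ^ t.card * ∏ v ∈ t, (Nat.card {e : E // s e = v ∧ r e = ρ v} : ℤ) := by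
            rw [← Finset.prod_const, ← Finset.prod_mul_distrib]
            exact Finset.prod_congr rfl fun v _ => by ring
          rw [h2, mul_one, h3]
          congr 1
          rw [← count_lemma s r ρ t ht]
          push_cast
          rfl
        · rw [if_neg ht]
          obtain ⟨v, hv, hvt⟩ := Finset.not_subset.mp ht
          have h0 : ∏ v ∈ Finset.univ \ t, (if v = ρ v then (1:ℤ) else 0) = 0 := by
            apply Finset.prod_eq_zero (Finset.mem_sdiff.mpr ⟨Finset.mem_univ v, hvt⟩)
            rw [if_neg]
            intro hc
            exact (Equiv.Perm.mem_support.mp hv) hc.symm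
          rw [h0, mul_zero]
    _ = ∑ t ∈ (Finset.univ : Finset V).powerset.filter (fun t => ρ.support ⊆ t),
          (-1 : ℤ) ^ t.card *
              ((Finset.univ.filter (fun D : Finset E =>
                IsCircuitConfig s r D ∧ Induces s r D ρ ∧ D.image s = t)).card : ℤ) := by
        rw [Finset.sum_filter]
    _ = ∑ t ∈ (Finset.univ : Finset V).powerset.filter (fun t => ρ.support ⊆ t),
          ∑ D ∈ (Finset.univ.filter (fun D : Finset E =>
              IsCircuitConfig s r D ∧ inducedPerm s r D = ρ)).filter
            (fun D => D.image s = t), (-1 : ℤ) ^ D.card := by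
        refine Finset.sum_congr rfl fun t _ => ?_
        rw [filter_config_eq]
        have hc : ∀ D ∈ (Finset.univ.filter (fun D : Finset E =>
              IsCircuitConfig s r D ∧ inducedPerm s r D = ρ)).filter
            (fun D => D.image s = t), (-1 : ℤ) ^ D.card = (-1 : ℤ) ^ t.card := by
          intro D hD
          obtain ⟨hD1, hit⟩ := Finset.mem_filter.mp hD
          obtain ⟨-, ⟨hs, -, -⟩, -⟩ := Finset.mem_filter.mp hD1
          rw [← hit, Finset.card_image_of_injOn hs]
        rw [Finset.sum_congr rfl hc, Finset.sum_const, nsmul_eq_mul, mul_comm]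
    _ = ∑ D ∈ Finset.univ.filter
          (fun D : Finset E => IsCircuitConfig s r D ∧ inducedPerm s r D = ρ),
        (-1 : ℤ) ^ D.card := by
        apply Finset.sum_fiberwise_of_maps_to
        intro D hD
        obtain ⟨-, hc, hip⟩ := Finset.mem_filter.mp hD
        obtain ⟨ρ', hρ'⟩ := exists_induces s r hc
        have := inducedPerm_eq s r hρ'
        rw [this] at hip
        subst hip
        rw [Finset.mem_filter]
        refine ⟨Finset.mem_powerset.mpr (Finset.subset_univ _), ?_⟩
        intro v hv
        by_contra hvs
        exact (Equiv.Perm.mem_support.mp hv) (hρ'.2 v hvs)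

end Aux

section Aux2

variable {V E : Type*} [Fintype V] [Fintype E] [DecidableEq V]

lemma ncard_image_congr {α β γ : Type*} {A : Set α} (hA : A.Finite) {f : α → β} {g : α → γ}
    (h : ∀ x ∈ A, ∀ y ∈ A, (f x = f y ↔ g x = g y)) : (f '' A).ncard = (g '' A).ncard := by
  have hf : f '' A = ↑(hA.toFinset.image f) := by
    rw [Finset.coe_image, Set.Finite.coe_toFinset]
  have hg : g '' A = ↑(hA.toFinset.image g) := by
    rw [Finset.coe_image, Set.Finite.coe_toFinset]
  rw [hf, hg, Set.ncard_coe_finset, Set.ncard_coe_finset]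
  refine Finset.card_bij (fun b hb => g (Finset.mem_image.mp hb).choose) ?_ ?_ ?_
  · intro b hb
    have hc := (Finset.mem_image.mp hb).choose_spec
    exact Finset.mem_image_of_mem g hc.1
  · intro b hb b' hb' hbb
    have hc := (Finset.mem_image.mp hb).choose_spec
    have hc' := (Finset.mem_image.mp hb').choose_spec
    have hA1 := (Set.Finite.mem_toFinset hA).mp hc.1
    have hA2 := (Set.Finite.mem_toFinset hA).mp hc'.1
    rw [← hc.2, ← hc'.2]
    exact (h _ hA1 _ hA2).mpr hbb
  · intro c hc
    obtain ⟨a, ha, rfl⟩ := Finset.mem_image.mp hc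
    have hb : f a ∈ hA.toFinset.image f := Finset.mem_image_of_mem f ha
    refine ⟨f a, hb, ?_⟩
    have hcc := (Finset.mem_image.mp hb).choose_spec
    exact (h _ ((Set.Finite.mem_toFinset hA).mp hcc.1) _ ((Set.Finite.mem_toFinset hA).mp ha)).mp hcc.2

lemma sameCycle_of_fixed {ρ : Equiv.Perm V} {x y : V} (hx : ρ x = x)
    (h : ρ.SameCycle x y) : x = y := by
  obtain ⟨n, hn⟩ := h
  rw [← hn, Equiv.Perm.zpow_apply_eq_self_of_apply_eq_self hx]

lemma quot_supp_ncard (ρ : Equiv.Perm V) :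
    ((Quotient.mk (sameCycleSetoid ρ)) '' ↑ρ.support).ncard = Multiset.card ρ.cycleType := by
  have key : ∀ x ∈ (↑ρ.support : Set V), ∀ y ∈ (↑ρ.support : Set V),
      (Quotient.mk (sameCycleSetoid ρ) x = Quotient.mk (sameCycleSetoid ρ) y ↔
        ρ.cycleOf x = ρ.cycleOf y) := by
    intro x hx y hy
    constructor
    · intro hq
      have hsc : ρ.SameCycle x y := Quotient.exact hq
      exact hsc.cycleOf_eq
    · intro hco
      apply Quotient.sound
      show ρ.SameCycle x y
      have hxs : x ∈ ρ.support := hx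
      have : x ∈ (ρ.cycleOf x).support :=
        Equiv.Perm.mem_support_cycleOf_iff.mpr ⟨Equiv.Perm.SameCycle.refl _ _, hxs⟩
      rw [hco] at this
      exact (Equiv.Perm.mem_support_cycleOf_iff.mp this).1.symm
  rw [ncard_image_congr (Set.toFinite _) key]
  have him : ρ.cycleOf '' ↑ρ.support = ↑ρ.cycleFactorsFinset := by
    ext c
    simp only [Set.mem_image, Finset.mem_coe]
    constructor
    · rintro ⟨x, hx, rfl⟩
      exact Equiv.Perm.cycleOf_mem_cycleFactorsFinset_iff.mpr hx
    · intro hc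
      have hcyc := (Equiv.Perm.mem_cycleFactorsFinset_iff.mp hc).1
      obtain ⟨x, hx⟩ := hcyc.nonempty_support
      refine ⟨x, ?_, (Equiv.Perm.cycle_is_cycleOf hx hc).symm⟩
      have := (Equiv.Perm.mem_cycleFactorsFinset_iff.mp hc).2 x hx
      rw [Equiv.Perm.mem_support] at hx ⊢
      rwa [← this]
  rw [him, Set.ncard_coe_finset, Equiv.Perm.cycleType_def, Multiset.card_map]
  rfl

lemma sign_mul_pow_card (s r : E → V) {D : Finset E} {ρ : Equiv.Perm V}
    (hc : IsCircuitConfig s r D) (hi : Induces s r D ρ) :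
    (Equiv.Perm.sign ρ : ℤ) * (-1 : ℤ) ^ D.card = (-1 : ℤ) ^ numCircuits s D ρ := by
  set S : Finset V := D.image s with hS
  have hsupp : ρ.support ⊆ S := by
    intro v hv
    by_contra hvs
    exact (Equiv.Perm.mem_support.mp hv) (hi.2 v hvs)
  have hDS : D.card = S.card := (Finset.card_image_of_injOn hc.1).symm
  set t := Multiset.card ρ.cycleType with htdef
  -- numCircuits computation
  have hsetS : (s '' ↑D) = (↑S : Set V) := by rw [hS, Finset.coe_image]
  have hsplit : (↑S : Set V) = ↑ρ.support ∪ ((↑S : Set V) \ ↑ρ.support) := by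
    rw [Set.union_diff_cancel (by exact_mod_cast hsupp)]
  have hinjfix : Set.InjOn (Quotient.mk (sameCycleSetoid ρ)) ((↑S : Set V) \ ↑ρ.support) := by
    intro x hx y hy hxy
    have hfx : ρ x = x := by
      have := hx.2
      simpa [Equiv.Perm.mem_support] using this
    exact sameCycle_of_fixed hfx (Quotient.exact hxy)
  have hdisj : Disjoint ((Quotient.mk (sameCycleSetoid ρ)) '' ↑ρ.support)
      ((Quotient.mk (sameCycleSetoid ρ)) '' ((↑S : Set V) \ ↑ρ.support)) := by
    rw [Set.disjoint_left]
    rintro q ⟨x, hx, rfl⟩ ⟨y, hy, hq⟩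
    have hfy : ρ y = y := by
      have := hy.2
      simpa [Equiv.Perm.mem_support] using this
    have : y = x := sameCycle_of_fixed hfy (Quotient.exact hq)
    subst this
    exact hy.2 hx
  have hnum : numCircuits s D ρ = t + (S.card - ρ.support.card) := by
    rw [numCircuits, hsetS, hsplit, Set.image_union,
      Set.ncard_union_eq hdisj (Set.toFinite _) (Set.toFinite _),
      quot_supp_ncard, Set.ncard_image_of_injOn hinjfix]
    congr 1
    rw [← Finset.coe_sdiff, Set.ncard_coe_finset, Finset.card_sdiff_of_subset hsupp]
  have hsign : (Equiv.Perm.sign ρ : ℤ) = (-1 : ℤ) ^ (ρ.support.card + t) := by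
    rw [Equiv.Perm.sign_of_cycleType, ← Equiv.Perm.sum_cycleType ρ]
    push_cast
    norm_num
    rfl
  have hle : ρ.support.card ≤ S.card := Finset.card_le_card hsupp
  have hexp : ρ.support.card + t + S.card = 2 * ρ.support.card + numCircuits s D ρ := by
    rw [hnum]; omega
  rw [hsign, hDS, ← pow_add, hexp, pow_add, pow_mul]
  norm_num

end Aux2


/-- Main lemma: for every permutation `ρ` of the vertices, the signed elementary product
of `1 - A` corresponding to `ρ` equals `∑ D, (-1) ^ c(D)` over circuit configurations `D`
inducing `ρ`; equivalently, it equals the number of such configurations with an even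
number of circuits minus the number with an odd number of circuits. -/
theorem signed_elementary_product_eq_signed_count {V E : Type*} [Fintype V] [Fintype E]
    [DecidableEq V] (s r : E → V) (ρ : Equiv.Perm V) :
    ((Equiv.Perm.sign ρ : ℤ) *
        ∏ v : V, ((1 : Matrix V V ℤ) - adjMatrix s r) v (ρ v) =
      ∑ D ∈ Finset.univ.filter
          (fun D : Finset E => IsCircuitConfig s r D ∧ inducedPerm s r D = ρ),
        (-1 : ℤ) ^ numCircuits s D ρ) ∧
    ((Equiv.Perm.sign ρ : ℤ) *
        ∏ v : V, ((1 : Matrix V V ℤ) - adjMatrix s r) v (ρ v) =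
      ((Finset.univ.filter (fun D : Finset E =>
          IsCircuitConfig s r D ∧ inducedPerm s r D = ρ ∧
            Even (numCircuits s D ρ))).card : ℤ) -
      ((Finset.univ.filter (fun D : Finset E =>
          IsCircuitConfig s r D ∧ inducedPerm s r D = ρ ∧
            Odd (numCircuits s D ρ))).card : ℤ)) := by
  have h1 : (Equiv.Perm.sign ρ : ℤ) *
        ∏ v : V, ((1 : Matrix V V ℤ) - adjMatrix s r) v (ρ v) =
      ∑ D ∈ Finset.univ.filter
          (fun D : Finset E => IsCircuitConfig s r D ∧ inducedPerm s r D = ρ),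
        (-1 : ℤ) ^ numCircuits s D ρ := by
    rw [prod_eq_sum s r ρ, Finset.mul_sum]
    refine Finset.sum_congr rfl fun D hD => ?_
    obtain ⟨-, hc, hip⟩ := Finset.mem_filter.mp hD
    obtain ⟨ρ', hρ'⟩ := exists_induces s r hc
    have heq := inducedPerm_eq s r hρ'
    rw [heq] at hip
    subst hip
    exact sign_mul_pow_card s r hc hρ'
  refine ⟨h1, ?_⟩
  rw [h1]
  rw [← Finset.sum_filter_add_sum_filter_not
    (Finset.univ.filter (fun D : Finset E => IsCircuitConfig s r D ∧ inducedPerm s r D = ρ))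
    (fun D => Even (numCircuits s D ρ))]
  have he : (Finset.univ.filter (fun D : Finset E =>
      IsCircuitConfig s r D ∧ inducedPerm s r D = ρ)).filter
        (fun D => Even (numCircuits s D ρ)) =
      Finset.univ.filter (fun D : Finset E =>
        IsCircuitConfig s r D ∧ inducedPerm s r D = ρ ∧ Even (numCircuits s D ρ)) := by
    rw [Finset.filter_filter]
    apply Finset.filter_congr
    intro D _
    tauto
  have ho : (Finset.univ.filter (fun D : Finset E =>
      IsCircuitConfig s r D ∧ inducedPerm s r D = ρ)).filter
        (fun D => ¬ Even (numCircuits s D ρ)) =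
      Finset.univ.filter (fun D : Finset E =>
        IsCircuitConfig s r D ∧ inducedPerm s r D = ρ ∧ Odd (numCircuits s D ρ)) := by
    rw [Finset.filter_filter]
    apply Finset.filter_congr
    intro D _
    rw [← Nat.not_even_iff_odd]
    tauto
  rw [he, ho]
  have hsum1 : ∑ D ∈ Finset.univ.filter (fun D : Finset E =>
        IsCircuitConfig s r D ∧ inducedPerm s r D = ρ ∧ Even (numCircuits s D ρ)),
      (-1 : ℤ) ^ numCircuits s D ρ =
      ((Finset.univ.filter (fun D : Finset E =>
        IsCircuitConfig s r D ∧ inducedPerm s r D = ρ ∧ Even (numCircuits s D ρ))).card : ℤ) := by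
    rw [Finset.card_eq_sum_ones]
    push_cast
    refine Finset.sum_congr rfl fun D hD => ?_
    obtain ⟨-, -, -, hev⟩ := Finset.mem_filter.mp hD
    exact Even.neg_one_pow hev
  have hsum2 : ∑ D ∈ Finset.univ.filter (fun D : Finset E =>
        IsCircuitConfig s r D ∧ inducedPerm s r D = ρ ∧ Odd (numCircuits s D ρ)),
      (-1 : ℤ) ^ numCircuits s D ρ =
      -((Finset.univ.filter (fun D : Finset E =>
        IsCircuitConfig s r D ∧ inducedPerm s r D = ρ ∧ Odd (numCircuits s D ρ))).card : ℤ) := by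
    rw [Finset.card_eq_sum_ones]
    push_cast
    rw [← Finset.sum_neg_distrib]
    refine Finset.sum_congr rfl fun D hD => ?_
    obtain ⟨-, -, -, hodd⟩ := Finset.mem_filter.mp hD
    rw [Odd.neg_one_pow hodd]
  rw [hsum1, hsum2]
  ring
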